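/- Consider h(α) = (1/(αn))(1 + (1/μ) log(1/(1−α))) for α ∈ (0,1), modeling the normalized average runtime of an (n, αn)-MDS-coded algorithm. The unique stationary point α* of h satisfies μ + 1 = 1/(1−α*) − log(1/(1−α*)), equivalently α* = 1 + 1/W_{-1}(−e^{−μ−1}) where W_{-1} is the lower branch of the Lambert W function, and the minimum value of h is −W_{-1}(−e^{−μ−1})/(μn). -/

import Mathlib

open Real Set

private lemma phi_mono_aux (t₁ t₂ : ℝ) (h1 : 1 ≤ t₁) (h2 : t₁ < t₂) :
    t₁ - Real.log t₁ < t₂ - Real.log t₂ := by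
  have ht1 : 0 < t₁ := by linarith
  have ht2 : 0 < t₂ := by linarith
  have h3 : Real.log (t₂ / t₁) < t₂ / t₁ - 1 :=
    Real.log_lt_sub_one_of_pos (by positivity) (((one_lt_div ht1).mpr h2).ne')
  rw [Real.log_div ht2.ne' ht1.ne'] at h3
  have h5 : t₂ / t₁ * t₁ = t₂ := div_mul_cancel₀ _ ht1.ne'
  nlinarith

private lemma MDS_hasDerivAt (μ n : ℝ) (hμ : 0 < μ) (hn : 0 < n) (α : ℝ)
    (hα : α ∈ Ioo (0:ℝ) 1) :
    HasDerivAt (fun α : ℝ => (1 / (α * n)) * (1 + (1 / μ) * Real.log (1 / (1 - α))))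
      ((1/(1-α) + Real.log (1-α) - (μ+1)) / (α^2 * n * μ)) α := by
  obtain ⟨h0, h1'⟩ := hα
  have h1α : (0:ℝ) < 1 - α := by linarith
  have feq : (fun α : ℝ => (1 / (α * n)) * (1 + (1 / μ) * Real.log (1 / (1 - α))))
      = (fun α : ℝ => (1/(α*n)) * (1 - (1/μ) * Real.log (1-α))) := by
    funext x
    rw [one_div (1 - x), Real.log_inv]
    ring
  rw [feq]
  have hu : HasDerivAt (fun α : ℝ => 1/(α*n)) (-n/(α*n)^2) α := by
    have h : HasDerivAt (fun α : ℝ => α*n) (1*n) α := (hasDerivAt_id α).mul_const n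
    have h2 := h.inv (by positivity)
    rw [one_mul] at h2
    have e : (fun α : ℝ => 1/(α*n)) = (fun α : ℝ => α*n)⁻¹ := by
      funext x; simp only [Pi.inv_apply, one_div]
    rw [e]; exact h2
  have hlog1 : HasDerivAt (fun x : ℝ => Real.log (1-x)) ((1-α)⁻¹ * (0 - 1)) α :=
    (Real.hasDerivAt_log h1α.ne').comp α ((hasDerivAt_const α (1:ℝ)).sub (hasDerivAt_id α))
  have hv : HasDerivAt (fun x : ℝ => 1 - (1/μ) * Real.log (1-x))
      (0 - (1/μ) * ((1-α)⁻¹ * (0 - 1))) α :=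
    (hasDerivAt_const α (1:ℝ)).sub (hlog1.const_mul (1/μ))
  have h := hu.mul hv
  refine h.congr_deriv ?_
  have hα0 : α ≠ 0 := h0.ne'
  have hn0 : n ≠ 0 := hn.ne'
  have hμ0 : μ ≠ 0 := hμ.ne'
  have h1α0 : 1 - α ≠ 0 := h1α.ne'
  field_simp
  ring

/-- Let `h(α) = (1/(αn))(1 + (1/μ) log(1/(1-α)))` on `(0,1)`, modeling the normalized
average runtime of an `(n, αn)`-MDS-coded algorithm.  Let `W` be the value of the lower
branch of the Lambert W function at `-e^{-μ-1}`, i.e. the unique `W ≤ -1` with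
`W e^W = -e^{-μ-1}`.  Then the unique stationary point `α*` of `h` in `(0,1)` satisfies
`μ + 1 = 1/(1-α*) - log(1/(1-α*))`, equivalently `α* = 1 + 1/W`, it minimizes `h` on
`(0,1)`, and the minimum value is `-W/(μn)`. -/
theorem optimal_MDS_code
    (μ n : ℝ) (hμ : 0 < μ) (hn : 0 < n)
    (W : ℝ) (hW1 : W ≤ -1) (hW2 : W * Real.exp W = -Real.exp (-μ - 1)) :
    ∃ αs ∈ Set.Ioo (0 : ℝ) 1,
      (∀ α ∈ Set.Ioo (0 : ℝ) 1,
        (deriv (fun α : ℝ => (1 / (α * n)) * (1 + (1 / μ) * Real.log (1 / (1 - α)))) α = 0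
          ↔ α = αs)) ∧
      μ + 1 = 1 / (1 - αs) - Real.log (1 / (1 - αs)) ∧
      αs = 1 + 1 / W ∧
      (∀ α ∈ Set.Ioo (0 : ℝ) 1,
        (1 / (αs * n)) * (1 + (1 / μ) * Real.log (1 / (1 - αs)))
          ≤ (1 / (α * n)) * (1 + (1 / μ) * Real.log (1 / (1 - α)))) ∧
      (1 / (αs * n)) * (1 + (1 / μ) * Real.log (1 / (1 - αs))) = -W / (μ * n) := by
  -- basic facts about W
  have hWlt : W < -1 := by
    rcases lt_or_eq_of_le hW1 with h | h
    · exact h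
    · exfalso
      rw [h] at hW2
      have he : Real.exp (-1) = Real.exp (-μ - 1) := by nlinarith [Real.exp_pos (-1:ℝ)]
      rw [Real.exp_eq_exp] at he
      linarith
  have hWneg : W < 0 := by linarith
  have hWpos : (0:ℝ) < -W := by linarith
  have hlogW : Real.log (-W) = -μ - 1 - W := by
    have h1 : (-W) * Real.exp W = Real.exp (-μ - 1) := by linarith
    have h2 := congrArg Real.log h1
    rw [Real.log_mul hWpos.ne' (Real.exp_ne_zero _), Real.log_exp, Real.log_exp] at h2
    linarith
  set αs : ℝ := 1 + 1/W with hαs_def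
  have h1αs : 1 - αs = (-W)⁻¹ := by
    rw [hαs_def, inv_neg, one_div]
    ring
  have h1αs_pos : (0:ℝ) < 1 - αs := by rw [h1αs]; positivity
  have hinv : 1 / (1 - αs) = -W := by
    rw [h1αs, one_div, inv_inv]
  have hαs_mem : αs ∈ Ioo (0:ℝ) 1 := by
    constructor
    · have hW1' : (1:ℝ) - αs < 1 := by
        rw [h1αs]
        rw [inv_lt_one_iff₀]
        right; linarith
      linarith
    · linarith
  -- ψ(α) = 1/(1-α) + log(1-α), value at αs
  have hlog1αs : Real.log (1 - αs) = μ + 1 + W := by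
    rw [h1αs, Real.log_inv, hlogW]; ring
  have hψαs : 1/(1-αs) + Real.log (1-αs) = μ + 1 := by
    rw [hinv, hlog1αs]; ring
  -- strict monotonicity of ψ on [0,1)
  have psi_mono : ∀ a b : ℝ, 0 ≤ a → a < b → b < 1 →
      1/(1-a) + Real.log (1-a) < 1/(1-b) + Real.log (1-b) := by
    intro a b ha hab hb1
    have h1a : (0:ℝ) < 1 - a := by linarith
    have h1b : (0:ℝ) < 1 - b := by linarith
    have ht : 1/(1-a) < 1/(1-b) := one_div_lt_one_div_of_lt h1b (by linarith)
    have h1t : 1 ≤ 1/(1-a) := by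
      rw [le_div_iff₀ h1a]; linarith
    have hm := phi_mono_aux _ _ h1t ht
    rw [one_div (1-a), one_div (1-b), Real.log_inv, Real.log_inv] at hm
    rw [one_div (1-a), one_div (1-b)]
    linarith
  have hαs0 : (0:ℝ) < αs := hαs_mem.1
  have hαs1 : αs < 1 := hαs_mem.2
  -- ψ α = μ+1 ↔ α = αs, for α ∈ (0,1)
  have hψ_iff : ∀ α ∈ Ioo (0:ℝ) 1, (1/(1-α) + Real.log (1-α) = μ + 1 ↔ α = αs) := by
    intro α hα
    constructor
    · intro h
      by_contra hne
      rcases lt_or_gt_of_ne hne with hlt | hgt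
      · have := psi_mono α αs hα.1.le hlt hαs1
        rw [h, hψαs] at this
        exact lt_irrefl _ this
      · have := psi_mono αs α hαs0.le hgt hα.2
        rw [h, hψαs] at this
        exact lt_irrefl _ this
    · intro h
      rw [h]; exact hψαs
  -- sign of derivative
  have hD_neg : ∀ x ∈ Ioo (0:ℝ) 1, x < αs →
      (1/(1-x) + Real.log (1-x) - (μ+1)) / (x^2 * n * μ) < 0 := by
    intro x hx hlt
    apply div_neg_of_neg_of_pos
    · have := psi_mono x αs hx.1.le hlt hαs1
      rw [hψαs] at this
      linarith
    · have : (0:ℝ) < x := hx.1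
      positivity
  have hD_pos : ∀ x ∈ Ioo (0:ℝ) 1, αs < x →
      0 < (1/(1-x) + Real.log (1-x) - (μ+1)) / (x^2 * n * μ) := by
    intro x hx hlt
    apply div_pos
    · have := psi_mono αs x hαs0.le hlt hx.2
      rw [hψαs] at this
      linarith
    · have : (0:ℝ) < x := hx.1
      positivity
  have hcont : ContinuousOn
      (fun α : ℝ => (1 / (α * n)) * (1 + (1 / μ) * Real.log (1 / (1 - α)))) (Ioo 0 1) :=
    fun x hx => ((MDS_hasDerivAt μ n hμ hn x hx).differentiableAt.continuousAt).continuousWithinAt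
  refine ⟨αs, hαs_mem, ?_, ?_, rfl, ?_, ?_⟩
  · -- stationary point iff
    intro α hα
    rw [(MDS_hasDerivAt μ n hμ hn α hα).deriv]
    rw [div_eq_zero_iff]
    have hden : α^2 * n * μ ≠ 0 := by
      have : (0:ℝ) < α := hα.1
      positivity
    constructor
    · intro h
      rcases h with h | h
      · exact (hψ_iff α hα).mp (by linarith)
      · exact absurd h hden
    · intro h
      left
      have := (hψ_iff α hα).mpr h
      linarith
  · -- μ + 1 equation
    rw [hinv, hlogW]
    ring
  · -- minimality
    intro α hα
    rcases lt_trichotomy α αs with hlt | heq | hgt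
    · have hsub : Icc α αs ⊆ Ioo (0:ℝ) 1 := fun x hx => ⟨lt_of_lt_of_le hα.1 hx.1, lt_of_le_of_lt hx.2 hαs1⟩
      have hanti : StrictAntiOn
          (fun α : ℝ => (1 / (α * n)) * (1 + (1 / μ) * Real.log (1 / (1 - α)))) (Icc α αs) := by
        apply strictAntiOn_of_deriv_neg (convex_Icc _ _) (hcont.mono hsub)
        intro x hx
        rw [interior_Icc] at hx
        have hx' : x ∈ Ioo (0:ℝ) 1 := hsub ⟨hx.1.le, hx.2.le⟩
        rw [(MDS_hasDerivAt μ n hμ hn x hx').deriv]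
        exact hD_neg x hx' hx.2
      exact (hanti ⟨le_refl α, hlt.le⟩ ⟨hlt.le, le_refl αs⟩ hlt).le
    · rw [heq]
    · have hsub : Icc αs α ⊆ Ioo (0:ℝ) 1 := fun x hx => ⟨lt_of_lt_of_le hαs0 hx.1, lt_of_le_of_lt hx.2 hα.2⟩
      have hmono : StrictMonoOn
          (fun α : ℝ => (1 / (α * n)) * (1 + (1 / μ) * Real.log (1 / (1 - α)))) (Icc αs α) := by
        apply strictMonoOn_of_deriv_pos (convex_Icc _ _) (hcont.mono hsub)
        intro x hx
        rw [interior_Icc] at hx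
        have hx' : x ∈ Ioo (0:ℝ) 1 := hsub ⟨hx.1.le, hx.2.le⟩
        rw [(MDS_hasDerivAt μ n hμ hn x hx').deriv]
        exact hD_pos x hx' hx.1
      exact (hmono ⟨le_refl αs, hgt.le⟩ ⟨hgt.le, le_refl α⟩ hgt).le
  · -- minimum value
    rw [hinv, hlogW]
    have hW1' : W + 1 ≠ 0 := by linarith
    have hWne : W ≠ 0 := by linarith
    rw [hαs_def]
    field_simp
    ring
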